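/- arXiv:1904.11346 — 2 statements merged into one kernel-verified Lean document; each statement's English description precedes it below -/
import Mathlib

section
/- Let T > 0, λ ∈ ℝ, and let a, m, σ, p : [0,T] → ℝ be continuous functions. Suppose x, y : [0,T] → ℝ are differentiable and satisfy x'(t) = (a(t) − m(t)p(t)) x(t) and y'(t) = (a(t) − m(t)p(t) + 2λ σ(t)² p(t)) y(t) for all t ∈ [0,T], with x(0) = y(0). Then y(t) = x(t) · exp(2λ ∫₀ᵗ σ(r)² p(r) dr) for every t ∈ [0,T]. -/
open Set

lemma ftc_icc {T : ℝ} (f : ℝ → ℝ) (hf : ContinuousOn f (Icc (0 : ℝ) T))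
    {t : ℝ} (ht : t ∈ Icc (0 : ℝ) T) :
    HasDerivWithinAt (fun u => ∫ r in (0 : ℝ)..u, f r) (f t) (Icc (0 : ℝ) T) t := by
  haveI : Fact (t ∈ Icc (0 : ℝ) T) := ⟨ht⟩
  have hint : IntervalIntegrable f MeasureTheory.volume 0 t := by
    apply ContinuousOn.intervalIntegrable
    apply hf.mono
    rw [uIcc_of_le ht.1]
    exact Icc_subset_Icc le_rfl ht.2
  exact intervalIntegral.integral_hasDerivWithinAt_right hint
    (hf.stronglyMeasurableAtFilter_nhdsWithin measurableSet_Icc t) (hf t ht)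

/-- Relation between the mean trajectories of the risk-sensitive and the robust
(adversarially) controlled systems:
`y(t) = x(t) · exp(2λ ∫₀ᵗ σ(r)² p(r) dr)`. -/
theorem mean_trajectory_exponential_relation (T : ℝ) (hT : 0 < T) (l : ℝ)
    (a m σ p : ℝ → ℝ)
    (hac : ContinuousOn a (Icc (0 : ℝ) T))
    (hmc : ContinuousOn m (Icc (0 : ℝ) T))
    (hσc : ContinuousOn σ (Icc (0 : ℝ) T))
    (hpc : ContinuousOn p (Icc (0 : ℝ) T))
    (x y : ℝ → ℝ)
    (hx : ∀ t ∈ Icc (0 : ℝ) T,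
      HasDerivWithinAt x ((a t - m t * p t) * x t) (Icc (0 : ℝ) T) t)
    (hy : ∀ t ∈ Icc (0 : ℝ) T,
      HasDerivWithinAt y ((a t - m t * p t + 2 * l * σ t ^ 2 * p t) * y t)
        (Icc (0 : ℝ) T) t)
    (h0 : x 0 = y 0) :
    ∀ t ∈ Icc (0 : ℝ) T,
      y t = x t * Real.exp (2 * l * ∫ r in (0 : ℝ)..t, σ r ^ 2 * p r) := by
  set f : ℝ → ℝ := fun t => a t - m t * p t with hf_def
  set g : ℝ → ℝ := fun t => 2 * l * σ t ^ 2 * p t with hg_def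
  have hfc : ContinuousOn f (Icc (0 : ℝ) T) := hac.sub (hmc.mul hpc)
  have hgc : ContinuousOn g (Icc (0 : ℝ) T) :=
    ((continuousOn_const.mul (hσc.pow 2)).mul hpc)
  set F : ℝ → ℝ := fun u => ∫ r in (0 : ℝ)..u, f r with hF_def
  set G : ℝ → ℝ := fun u => ∫ r in (0 : ℝ)..u, g r with hG_def
  have hG_eq : ∀ u, G u = 2 * l * ∫ r in (0 : ℝ)..u, σ r ^ 2 * p r := by
    intro u
    simp only [hG_def, hg_def]
    rw [← intervalIntegral.integral_const_mul]
    congr 1; ext r; ring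
  have hF : ∀ t ∈ Icc (0 : ℝ) T, HasDerivWithinAt F (f t) (Icc (0 : ℝ) T) t :=
    fun t ht => ftc_icc f hfc ht
  have hG : ∀ t ∈ Icc (0 : ℝ) T, HasDerivWithinAt G (g t) (Icc (0 : ℝ) T) t :=
    fun t ht => ftc_icc g hgc ht
  set Φ : ℝ → ℝ := fun u => y u * Real.exp (-(F u + G u)) - x u * Real.exp (-F u)
    with hΦ_def
  have hΦ : ∀ t ∈ Icc (0 : ℝ) T, HasDerivWithinAt Φ 0 (Icc (0 : ℝ) T) t := by
    intro t ht
    have h1 : HasDerivWithinAt (fun u => Real.exp (-(F u + G u)))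
        (Real.exp (-(F t + G t)) * (-(f t + g t))) (Icc (0 : ℝ) T) t :=
      (((hF t ht).add (hG t ht)).neg).exp
    have h2 : HasDerivWithinAt (fun u => Real.exp (-F u))
        (Real.exp (-F t) * (-(f t))) (Icc (0 : ℝ) T) t :=
      ((hF t ht).neg).exp
    have h3 := ((hy t ht).mul h1).sub ((hx t ht).mul h2)
    refine h3.congr_deriv ?_
    simp only [hf_def, hg_def]
    ring
  have hΦcont : ContinuousOn Φ (Icc (0 : ℝ) T) :=
    fun t ht => (hΦ t ht).continuousWithinAt
  have hconst : ∀ t ∈ Icc (0 : ℝ) T, Φ t = Φ 0 := by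
    apply constant_of_has_deriv_right_zero hΦcont
    intro t ht
    apply (hΦ t ⟨ht.1, ht.2.le⟩).mono_of_mem_nhdsWithin
    have h1 : Iio T ∈ nhdsWithin t (Ici t) := mem_nhdsWithin_of_mem_nhds (Iio_mem_nhds ht.2)
    filter_upwards [h1, self_mem_nhdsWithin] with u hu1 hu2
    exact ⟨le_trans ht.1 hu2, hu1.le⟩
  have hΦ0 : Φ 0 = 0 := by
    simp [hΦ_def, hF_def, hG_def, intervalIntegral.integral_same, h0]
  intro t ht
  have h := hconst t ht
  rw [hΦ0, sub_eq_zero] at h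
  rw [← hG_eq t]
  have hexp : Real.exp (-(F t + G t)) ≠ 0 := Real.exp_ne_zero _
  have : y t = x t * Real.exp (-F t) / Real.exp (-(F t + G t)) := by
    field_simp [← h]
    exact h
  rw [this, Real.exp_neg, Real.exp_neg, Real.exp_add]
  field_simp
end

section
/- Let T > 0, λ ∈ ℝ, and let a, m, σ, p : [0,T] → ℝ be continuous functions. Suppose x, y : [0,T] → ℝ are differentiable and satisfy x'(t) = (a(t) − m(t)p(t)) x(t) and y'(t) = (a(t) − m(t)p(t) + 2λ σ(t)² p(t)) y(t) for all t ∈ [0,T], with x(0) = y(0). If moreover x(0) ≠ 0, λ ≠ 0, and σ(r)² p(r) > 0 for all r ∈ [0,T], then y(t) ≠ x(t) for every t ∈ (0,T]. -/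
open Set

open intervalIntegral in
private lemma linODE_sol (T : ℝ) (f : ℝ → ℝ) (hfc : ContinuousOn f (Icc (0 : ℝ) T))
    (x : ℝ → ℝ)
    (hx : ∀ t ∈ Icc (0 : ℝ) T, HasDerivWithinAt x (f t * x t) (Icc (0 : ℝ) T) t) :
    ∀ t ∈ Icc (0 : ℝ) T, x t = x 0 * Real.exp (∫ s in (0:ℝ)..t, f s) := by
  set F : ℝ → ℝ := fun t => ∫ s in (0:ℝ)..t, f s with hF
  have hFd : ∀ t ∈ Icc (0 : ℝ) T, HasDerivWithinAt F (f t) (Icc (0 : ℝ) T) t := by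
    intro t ht
    haveI : Fact (t ∈ Icc (0 : ℝ) T) := ⟨ht⟩
    have hint : IntervalIntegrable f MeasureTheory.volume 0 t := by
      apply ContinuousOn.intervalIntegrable
      apply hfc.mono
      rw [uIcc_of_le ht.1]
      exact Icc_subset_Icc le_rfl ht.2
    have hmeas : StronglyMeasurableAtFilter f (nhdsWithin t (Icc (0 : ℝ) T))
        MeasureTheory.volume :=
      ⟨Icc (0 : ℝ) T, self_mem_nhdsWithin, hfc.aestronglyMeasurable measurableSet_Icc⟩
    exact integral_hasDerivWithinAt_right hint hmeas (hfc t ht)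
  have hconst : ∀ t ∈ Icc (0 : ℝ) T, x t * Real.exp (-F t) = x 0 * Real.exp (-F 0) := by
    intro t ht
    have h0T : (0 : ℝ) ∈ Icc (0 : ℝ) T := ⟨le_refl 0, le_trans ht.1 ht.2⟩
    have key : ∀ s ∈ Icc (0 : ℝ) T,
        HasDerivWithinAt (fun u => x u * Real.exp (-F u)) 0 (Icc (0 : ℝ) T) s := by
      intro s hs
      have h1 : HasDerivWithinAt (fun u => Real.exp (-F u))
          (Real.exp (-F s) * (-f s)) (Icc (0 : ℝ) T) s :=
        ((hFd s hs).neg).exp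
      have := (hx s hs).mul h1
      exact this.congr_deriv (by ring)
    have := Convex.norm_image_sub_le_of_norm_hasDerivWithin_le (C := 0)
      (f' := fun _ => (0:ℝ)) key (fun s _ => by simp) (convex_Icc 0 T) h0T ht
    have h2 : ‖x t * Real.exp (-F t) - x 0 * Real.exp (-F 0)‖ ≤ 0 := by
      simpa using this
    have h3 := norm_le_zero_iff.mp h2
    have := sub_eq_zero.mp h3
    linarith [this]
  intro t ht
  have h := hconst t ht
  have hF0 : F 0 = 0 := by simp [hF]
  rw [hF0] at h
  simp only [neg_zero, Real.exp_zero, mul_one] at h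
  have := congrArg (· * Real.exp (F t)) h
  simpa only [mul_assoc, ← Real.exp_add, neg_add_cancel, Real.exp_zero, mul_one] using this

/-- The mean trajectories of the risk-sensitive and the robust (adversarially)
controlled systems differ on `(0,T]` whenever `λ ≠ 0`, `x(0) ≠ 0` and
`σ² p > 0` on `[0,T]`. -/
theorem mean_trajectories_differ (T : ℝ) (hT : 0 < T) (l : ℝ)
    (a m σ p : ℝ → ℝ)
    (hac : ContinuousOn a (Icc (0 : ℝ) T))
    (hmc : ContinuousOn m (Icc (0 : ℝ) T))
    (hσc : ContinuousOn σ (Icc (0 : ℝ) T))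
    (hpc : ContinuousOn p (Icc (0 : ℝ) T))
    (x y : ℝ → ℝ)
    (hx : ∀ t ∈ Icc (0 : ℝ) T,
      HasDerivWithinAt x ((a t - m t * p t) * x t) (Icc (0 : ℝ) T) t)
    (hy : ∀ t ∈ Icc (0 : ℝ) T,
      HasDerivWithinAt y ((a t - m t * p t + 2 * l * σ t ^ 2 * p t) * y t)
        (Icc (0 : ℝ) T) t)
    (h0 : x 0 = y 0)
    (hx0 : x 0 ≠ 0) (hl : l ≠ 0)
    (hσp : ∀ r ∈ Icc (0 : ℝ) T, 0 < σ r ^ 2 * p r) :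
    ∀ t ∈ Ioc (0 : ℝ) T, y t ≠ x t := by
  have hfc : ContinuousOn (fun t => a t - m t * p t) (Icc (0 : ℝ) T) :=
    hac.sub (hmc.mul hpc)
  have hqc : ContinuousOn (fun t => σ t ^ 2 * p t) (Icc (0 : ℝ) T) :=
    ((hσc.pow 2).mul hpc)
  have hgc : ContinuousOn (fun t => a t - m t * p t + 2 * l * σ t ^ 2 * p t)
      (Icc (0 : ℝ) T) := by
    apply hfc.add
    exact (continuousOn_const.mul (hσc.pow 2)).mul hpc
  have hxs := linODE_sol T _ hfc x hx
  have hys := linODE_sol T _ hgc y (fun t ht => hy t ht)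
  intro t ht
  have htI : t ∈ Icc (0 : ℝ) T := ⟨le_of_lt ht.1, ht.2⟩
  have hintf : IntervalIntegrable (fun s => a s - m s * p s) MeasureTheory.volume 0 t := by
    apply ContinuousOn.intervalIntegrable
    apply hfc.mono
    rw [uIcc_of_le htI.1]
    exact Icc_subset_Icc le_rfl htI.2
  have hintq : IntervalIntegrable (fun s => 2 * l * σ s ^ 2 * p s) MeasureTheory.volume 0 t := by
    apply ContinuousOn.intervalIntegrable
    apply ContinuousOn.mono (s := Icc (0:ℝ) T)
    · exact (continuousOn_const.mul (hσc.pow 2)).mul hpc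
    · rw [uIcc_of_le htI.1]; exact Icc_subset_Icc le_rfl htI.2
  have hintq' : IntervalIntegrable (fun s => σ s ^ 2 * p s) MeasureTheory.volume 0 t := by
    apply ContinuousOn.intervalIntegrable
    apply hqc.mono
    rw [uIcc_of_le htI.1]
    exact Icc_subset_Icc le_rfl htI.2
  have hqpos : 0 < ∫ s in (0:ℝ)..t, σ s ^ 2 * p s := by
    apply intervalIntegral.intervalIntegral_pos_of_pos_on hintq'
    · intro s hs
      exact hσp s ⟨le_of_lt hs.1, le_trans (le_of_lt hs.2) htI.2⟩
    · exact ht.1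
  intro hcontra
  rw [hxs t htI, hys t htI, ← h0] at hcontra
  have hGF : Real.exp (∫ s in (0:ℝ)..t, (a s - m s * p s + 2 * l * σ s ^ 2 * p s))
      = Real.exp (∫ s in (0:ℝ)..t, (a s - m s * p s)) :=
    mul_left_cancel₀ hx0 hcontra
  have hGF' := Real.exp_injective hGF
  rw [intervalIntegral.integral_add hintf hintq] at hGF'
  have hz : (∫ s in (0:ℝ)..t, 2 * l * σ s ^ 2 * p s) = 0 := by linarith
  have : (∫ s in (0:ℝ)..t, 2 * l * σ s ^ 2 * p s)
      = 2 * l * ∫ s in (0:ℝ)..t, σ s ^ 2 * p s := by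
    rw [← intervalIntegral.integral_const_mul]
    congr 1
    ext s
    ring
  rw [this] at hz
  have : 2 * l ≠ 0 := by positivity
  have := mul_eq_zero.mp hz
  rcases this with h | h
  · exact ‹2 * l ≠ 0› h
  · linarith
end
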